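/- Let X : ℝ → ℝ be continuous and nondecreasing, fix t ≥ 0, let φ : ℝ → ℝ be nonnegative and Lebesgue integrable on [0, t], and let U ⊆ (0, ∞) be an open set such that (0, t) \ U has Lebesgue measure zero. Suppose that for all real numbers s ≤ u with [s, u] ⊆ U one has X(u) − X(s) = ∫_s^u φ(v) dv. Then ∫_0^t φ(v) dv ≤ X(t) − X(0). -/

import Mathlib

open MeasureTheory

/-- Finite disjoint open intervals in `[c,d]`: the sum of increments of a monotone
function over their endpoints is at most the total increment. -/
lemma sum_incr (X : ℝ → ℝ) (hXm : Monotone X) :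
    ∀ (S : Finset (ℝ × ℝ)) (c d : ℝ), c ≤ d →
      (∀ p ∈ S, c ≤ p.1 ∧ p.1 < p.2 ∧ p.2 ≤ d) →
      ((S : Set (ℝ × ℝ)).Pairwise fun p q => Disjoint (Set.Ioo p.1 p.2) (Set.Ioo q.1 q.2)) →
      (∑ p ∈ S, (X p.2 - X p.1)) ≤ X d - X c := by
  intro S
  induction S using Finset.strongInduction with
  | _ S ih =>
    intro c d hcd hmem hdisj
    rcases S.eq_empty_or_nonempty with rfl | hne
    · simpa using sub_nonneg.2 (hXm hcd)
    obtain ⟨p₀, hp₀S, hp₀max⟩ := S.exists_max_image (fun p => p.2) hne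
    obtain ⟨hc0, hlt0, hd0⟩ := hmem p₀ hp₀S
    have herase : ∀ q ∈ S.erase p₀, c ≤ q.1 ∧ q.1 < q.2 ∧ q.2 ≤ p₀.1 := by
      intro q hq
      have hqS := Finset.mem_of_mem_erase hq
      have hqne := Finset.ne_of_mem_erase hq
      obtain ⟨hc, hlt, hd⟩ := hmem q hqS
      refine ⟨hc, hlt, ?_⟩
      by_contra hcon
      push_neg at hcon
      have hdis := hdisj (by exact_mod_cast hqS) (by exact_mod_cast hp₀S) hqne
      have hq2 : q.2 ≤ p₀.2 := hp₀max q hqS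
      have hm : max q.1 p₀.1 < q.2 := max_lt hlt hcon
      set z := (max q.1 p₀.1 + q.2) / 2 with hz
      have hz1 : max q.1 p₀.1 < z := by rw [hz]; linarith
      have hz2 : z < q.2 := by rw [hz]; linarith
      have hxq : z ∈ Set.Ioo q.1 q.2 := ⟨lt_of_le_of_lt (le_max_left _ _) hz1, hz2⟩
      have hxp : z ∈ Set.Ioo p₀.1 p₀.2 :=
        ⟨lt_of_le_of_lt (le_max_right _ _) hz1, lt_of_lt_of_le hz2 hq2⟩
      exact Set.disjoint_left.1 hdis hxq hxp
    have hsum : ∑ p ∈ S, (X p.2 - X p.1)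
        = (∑ p ∈ S.erase p₀, (X p.2 - X p.1)) + (X p₀.2 - X p₀.1) := by
      rw [Finset.sum_erase_add _ _ hp₀S]
    have hIH : (∑ p ∈ S.erase p₀, (X p.2 - X p.1)) ≤ X p₀.1 - X c := by
      refine ih (S.erase p₀) (Finset.erase_ssubset hp₀S) c p₀.1 hc0 herase ?_
      exact hdisj.mono (by exact_mod_cast Finset.erase_subset _ _)
    have hXd : X p₀.2 ≤ X d := hXm hd0
    rw [hsum]
    linarith

/-- A connected component of an open subset of `(0,t)` is an interval `(a,b)` with
`0 ≤ a < b ≤ t`. -/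
lemma comp_Ioo {V : Set ℝ} {t : ℝ} (hV : IsOpen V) (hVsub : V ⊆ Set.Ioo 0 t)
    {x : ℝ} (hx : x ∈ V) :
    ∃ a b : ℝ, 0 ≤ a ∧ a < b ∧ b ≤ t ∧ connectedComponentIn V x = Set.Ioo a b := by
  set C := connectedComponentIn V x with hC
  have hCV : C ⊆ V := connectedComponentIn_subset V x
  have hxC : x ∈ C := mem_connectedComponentIn hx
  have hCopen : IsOpen C := hV.connectedComponentIn
  have hpc : IsPreconnected C := isPreconnected_connectedComponentIn
  have hbdd : BddBelow C := ⟨0, fun y hy => (hVsub (hCV hy)).1.le⟩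
  have hBdd : BddAbove C := ⟨t, fun y hy => (hVsub (hCV hy)).2.le⟩
  have hne : C.Nonempty := ⟨x, hxC⟩
  set a := sInf C with ha
  set b := sSup C with hb
  have hop : ∀ y ∈ C, ∃ ε > 0, Set.Ioo (y - ε) (y + ε) ⊆ C := by
    intro y hy
    obtain ⟨ε, hε, hball⟩ := Metric.isOpen_iff.1 hCopen y hy
    rw [Real.ball_eq_Ioo] at hball
    exact ⟨ε, hε, hball⟩
  have hmem : ∀ y ∈ C, a < y ∧ y < b := by
    intro y hy
    obtain ⟨ε, hε, hsub⟩ := hop y hy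
    have h1 : y - ε / 2 ∈ C := hsub ⟨by linarith, by linarith⟩
    have h2 : y + ε / 2 ∈ C := hsub ⟨by linarith, by linarith⟩
    constructor
    · exact lt_of_le_of_lt (csInf_le hbdd h1) (by linarith)
    · exact lt_of_lt_of_le (by linarith : y < y + ε / 2) (le_csSup hBdd h2)
  have hsub2 : Set.Ioo a b ⊆ C := by
    intro y hy
    obtain ⟨z, hzC, hz⟩ := exists_lt_of_csInf_lt hne hy.1
    obtain ⟨w, hwC, hw⟩ := exists_lt_of_lt_csSup hne hy.2
    exact hpc.ordConnected.out hzC hwC ⟨hz.le, hw.le⟩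
  have hCeq : C = Set.Ioo a b :=
    Set.Subset.antisymm (fun y hy => ⟨(hmem y hy).1, (hmem y hy).2⟩) hsub2
  refine ⟨a, b, ?_, (hmem x hxC).1.trans (hmem x hxC).2, ?_, hCeq⟩
  · exact le_csInf hne fun y hy => (hVsub (hCV hy)).1.le
  · exact csSup_le hne fun y hy => (hVsub (hCV hy)).2.le

/-- The increment of a monotone `X` over `(a,b) ⊆ U` dominates `∫_{(a,b)} φ`. -/
lemma incr_ge (X : ℝ → ℝ) (hXm : Monotone X) (t : ℝ)
    (φ : ℝ → ℝ) (hφ0 : ∀ v, 0 ≤ φ v) (hφint : IntegrableOn φ (Set.Icc 0 t))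
    (U : Set ℝ)
    (hinc : ∀ s u : ℝ, s ≤ u → Set.Icc s u ⊆ U → X u - X s = ∫ v in s..u, φ v)
    {a b : ℝ} (h0a : 0 ≤ a) (hab : a < b) (hbt : b ≤ t) (hIU : Set.Ioo a b ⊆ U) :
    (∫ v in Set.Ioo a b, φ v) ≤ X b - X a := by
  set ε : ℕ → ℝ := fun n => (b - a) / (n + 3) with hε
  have hba : 0 < b - a := by linarith
  have hεpos : ∀ n, 0 < ε n := fun n => by positivity
  have hεsmall : ∀ n, ε n ≤ (b - a) / 3 := by
    intro n
    show (b - a) / ((n : ℝ) + 3) ≤ (b - a) / 3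
    gcongr
    linarith [Nat.cast_nonneg (α := ℝ) n]
  set s : ℕ → Set ℝ := fun n => Set.Ioo (a + ε n) (b - ε n) with hs
  have hanti : ∀ m n : ℕ, m ≤ n → ε n ≤ ε m := by
    intro m n hmn
    show (b - a) / ((n : ℝ) + 3) ≤ (b - a) / ((m : ℝ) + 3)
    gcongr
  have hmono : Monotone s := by
    intro m n hmn
    exact Set.Ioo_subset_Ioo (by linarith [hanti m n hmn]) (by linarith [hanti m n hmn])
  have hsubIoo : ∀ n, s n ⊆ Set.Ioo a b := by
    intro n y hy
    exact ⟨by linarith [hy.1, hεpos n], by linarith [hy.2, hεpos n]⟩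
  have hunion : (⋃ n, s n) = Set.Ioo a b := by
    apply Set.Subset.antisymm (Set.iUnion_subset hsubIoo)
    intro y hy
    set δ := min (y - a) (b - y) with hδ
    have hδpos : 0 < δ := lt_min (by linarith [hy.1]) (by linarith [hy.2])
    obtain ⟨n, hn⟩ := exists_nat_gt ((b - a) / δ)
    have hεδ : ε n < δ := by
      rw [hε]
      show (b - a) / ((n : ℝ) + 3) < δ
      rw [div_lt_iff₀ (by positivity)]
      rw [div_lt_iff₀ hδpos] at hn
      nlinarith [hδpos]
    refine Set.mem_iUnion.2 ⟨n, ⟨?_, ?_⟩⟩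
    · have : δ ≤ y - a := min_le_left _ _
      linarith
    · have : δ ≤ b - y := min_le_right _ _
      linarith
  have hIoosub : Set.Ioo a b ⊆ Set.Icc 0 t := fun y hy =>
    ⟨le_trans h0a hy.1.le, hy.2.le.trans hbt⟩
  have hint : IntegrableOn φ (Set.Ioo a b) := hφint.mono_set hIoosub
  have htend := tendsto_setIntegral_of_monotone (μ := volume) (f := φ)
      (fun n => measurableSet_Ioo) hmono (hunion ▸ hint)
  rw [hunion] at htend
  refine le_of_tendsto htend (Filter.Eventually.of_forall fun n => ?_)
  have hle : a + ε n ≤ b - ε n := by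
    have := hεsmall n; linarith
  have hIccU : Set.Icc (a + ε n) (b - ε n) ⊆ U := fun y hy =>
    hIU ⟨by linarith [hy.1, hεpos n], by linarith [hy.2, hεpos n]⟩
  have h1 : (∫ v in s n, φ v) ≤ ∫ v in Set.Ioc (a + ε n) (b - ε n), φ v := by
    refine setIntegral_mono_set (hφint.mono_set ?_)
      (Filter.Eventually.of_forall fun v => hφ0 v)
      (HasSubset.Subset.eventuallyLE Set.Ioo_subset_Ioc_self)
    intro y hy
    exact ⟨by linarith [hy.1, hεpos n, h0a], by linarith [hy.2, hεpos n, hbt]⟩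
  have h2 : (∫ v in Set.Ioc (a + ε n) (b - ε n), φ v) = ∫ v in (a + ε n)..(b - ε n), φ v :=
    (intervalIntegral.integral_of_le hle).symm
  have h3 := hinc _ _ hle hIccU
  have h4 : X (b - ε n) - X (a + ε n) ≤ X b - X a := by
    have hb' : X (b - ε n) ≤ X b := hXm (by linarith [hεpos n])
    have ha' : X a ≤ X (a + ε n) := hXm (by linarith [hεpos n])
    linarith
  calc (∫ v in s n, φ v) ≤ ∫ v in Set.Ioc (a + ε n) (b - ε n), φ v := h1
    _ = X (b - ε n) - X (a + ε n) := by rw [h2, ← h3]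
    _ ≤ X b - X a := h4

/-- Bound for the integral over a compact subset of the open set. -/
lemma compact_bound (X : ℝ → ℝ) (hXm : Monotone X) (t : ℝ) (ht : 0 ≤ t)
    (φ : ℝ → ℝ) (hφ0 : ∀ v, 0 ≤ φ v) (hφint : IntegrableOn φ (Set.Icc 0 t))
    (U : Set ℝ)
    (hinc : ∀ s u : ℝ, s ≤ u → Set.Icc s u ⊆ U → X u - X s = ∫ v in s..u, φ v)
    {V : Set ℝ} (hVopen : IsOpen V) (hVsub : V ⊆ Set.Ioo 0 t) (hVU : V ⊆ U)
    {K : Set ℝ} (hK : IsCompact K) (hKV : K ⊆ V) :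
    (∫ v in K, φ v) ≤ X t - X 0 := by
  classical
  have hcover : K ⊆ ⋃ x ∈ K, connectedComponentIn V x := fun y hy =>
    Set.mem_biUnion hy (mem_connectedComponentIn (hKV hy))
  obtain ⟨F, hFK, hFfin, hcov⟩ := hK.elim_finite_subcover_image
    (fun x _ => hVopen.connectedComponentIn) hcover
  choose! A B hA hAB hB hCeq using fun x (hx : x ∈ V) => comp_Ioo hVopen hVsub hx
  set S : Finset (ℝ × ℝ) := hFfin.toFinset.image (fun x => (A x, B x)) with hS
  have hFV : ∀ x ∈ F, x ∈ V := fun x hx => hKV (hFK hx)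
  have hpmem : ∀ p ∈ S, ∃ x ∈ F, p = (A x, B x) ∧
      connectedComponentIn V x = Set.Ioo p.1 p.2 := by
    intro p hp
    simp only [hS, Finset.mem_image, Set.Finite.mem_toFinset] at hp
    obtain ⟨x, hxF, rfl⟩ := hp
    exact ⟨x, hxF, rfl, hCeq x (hFV x hxF)⟩
  have hprops : ∀ p ∈ S, 0 ≤ p.1 ∧ p.1 < p.2 ∧ p.2 ≤ t := by
    intro p hp
    obtain ⟨x, hxF, rfl, _⟩ := hpmem p hp
    exact ⟨hA x (hFV x hxF), hAB x (hFV x hxF), hB x (hFV x hxF)⟩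
  have hIooU : ∀ p ∈ S, Set.Ioo p.1 p.2 ⊆ U := by
    intro p hp
    obtain ⟨x, hxF, rfl, hC⟩ := hpmem p hp
    rw [← hC]
    exact (connectedComponentIn_subset V x).trans hVU
  have hdisj : (↑S : Set (ℝ × ℝ)).Pairwise
      fun p q => Disjoint (Set.Ioo p.1 p.2) (Set.Ioo q.1 q.2) := by
    intro p hp q hq hpq
    obtain ⟨x, hxF, hpx, hpC⟩ := hpmem p (by exact_mod_cast hp)
    obtain ⟨y, hyF, hqy, hqC⟩ := hpmem q (by exact_mod_cast hq)
    rw [Set.disjoint_left]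
    intro z hzp hzq
    have hz1 : z ∈ connectedComponentIn V x := by rw [hpC]; exact hzp
    have hz2 : z ∈ connectedComponentIn V y := by rw [hqC]; exact hzq
    have h1 : connectedComponentIn V x = connectedComponentIn V z :=
      connectedComponentIn_eq hz1
    have h2 : connectedComponentIn V y = connectedComponentIn V z :=
      connectedComponentIn_eq hz2
    have hIoo : Set.Ioo p.1 p.2 = Set.Ioo q.1 q.2 := by rw [← hpC, h1, ← h2, hqC]
    have hplt := (hprops p (by exact_mod_cast hp)).2.1
    have hqlt := (hprops q (by exact_mod_cast hq)).2.1
    apply hpq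
    have e1 : p.1 = q.1 := by
      have := congrArg sInf hIoo
      rwa [csInf_Ioo hplt, csInf_Ioo hqlt] at this
    have e2 : p.2 = q.2 := by
      have := congrArg sSup hIoo
      rwa [csSup_Ioo hplt, csSup_Ioo hqlt] at this
    exact Prod.ext e1 e2
  have hKsub : K ⊆ ⋃ p ∈ S, Set.Ioo p.1 p.2 := by
    intro y hy
    obtain ⟨x, hxF, hyC⟩ := Set.mem_iUnion₂.1 (hcov hy)
    refine Set.mem_iUnion₂.2 ⟨(A x, B x), ?_, ?_⟩
    · simp only [hS, Finset.mem_image, Set.Finite.mem_toFinset]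
      exact ⟨x, hxF, rfl⟩
    · have := hCeq x (hFV x hxF)
      rw [this] at hyC
      exact hyC
  have hIooIcc : ∀ p ∈ S, Set.Ioo p.1 p.2 ⊆ Set.Icc 0 t := by
    intro p hp y hy
    obtain ⟨h1, h2, h3⟩ := hprops p hp
    exact ⟨le_trans h1 hy.1.le, hy.2.le.trans h3⟩
  have hintb : IntegrableOn φ (⋃ p ∈ S, Set.Ioo p.1 p.2) :=
    hφint.mono_set (Set.iUnion₂_subset hIooIcc)
  have hmono1 : (∫ v in K, φ v) ≤ ∫ v in ⋃ p ∈ S, Set.Ioo p.1 p.2, φ v :=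
    setIntegral_mono_set hintb (Filter.Eventually.of_forall fun v => hφ0 v)
      (HasSubset.Subset.eventuallyLE hKsub)
  have heq : (∫ v in ⋃ p ∈ S, Set.Ioo p.1 p.2, φ v)
      = ∑ p ∈ S, ∫ v in Set.Ioo p.1 p.2, φ v :=
    integral_biUnion_finset S (fun p _ => measurableSet_Ioo) hdisj
      (fun p hp => hφint.mono_set (hIooIcc p hp))
  have hsum1 : (∑ p ∈ S, ∫ v in Set.Ioo p.1 p.2, φ v)
      ≤ ∑ p ∈ S, (X p.2 - X p.1) := by
    refine Finset.sum_le_sum fun p hp => ?_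
    obtain ⟨h1, h2, h3⟩ := hprops p hp
    exact incr_ge X hXm t φ hφ0 hφint U hinc h1 h2 h3 (hIooU p hp)
  have hsum2 := sum_incr X hXm S 0 t ht hprops hdisj
  calc (∫ v in K, φ v) ≤ ∫ v in ⋃ p ∈ S, Set.Ioo p.1 p.2, φ v := hmono1
    _ = ∑ p ∈ S, ∫ v in Set.Ioo p.1 p.2, φ v := heq
    _ ≤ ∑ p ∈ S, (X p.2 - X p.1) := hsum1
    _ ≤ X t - X 0 := hsum2

/-- If a continuous nondecreasing `X` has increments given by
integrating a nonnegative integrable `φ` on every closed interval contained in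
an open set `U ⊆ (0, ∞)` of full measure in `(0, t)`, then
`∫₀ᵗ φ ≤ X t − X 0`. -/
theorem integral_le_increment (X : ℝ → ℝ) (hXc : Continuous X) (hXm : Monotone X)
    (t : ℝ) (ht : 0 ≤ t)
    (φ : ℝ → ℝ) (hφ0 : ∀ v, 0 ≤ φ v) (hφint : IntegrableOn φ (Set.Icc 0 t))
    (U : Set ℝ) (hU : U ⊆ Set.Ioi (0 : ℝ)) (hUopen : IsOpen U)
    (hUfull : volume (Set.Ioo 0 t \ U) = 0)
    (hinc : ∀ s u : ℝ, s ≤ u → Set.Icc s u ⊆ U → X u - X s = ∫ v in s..u, φ v) :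
    (∫ v in (0 : ℝ)..t, φ v) ≤ X t - X 0 := by
  classical
  set V := Set.Ioo 0 t ∩ U with hV
  have hVopen : IsOpen V := isOpen_Ioo.inter hUopen
  have hVsub : V ⊆ Set.Ioo 0 t := Set.inter_subset_left
  have hVU : V ⊆ U := Set.inter_subset_right
  have h1 : (∫ v in (0 : ℝ)..t, φ v) = ∫ v in Set.Ioo 0 t, φ v := by
    rw [intervalIntegral.integral_of_le ht, integral_Ioc_eq_integral_Ioo]
  have haeeq : Set.Ioo 0 t =ᵐ[volume] V := by
    rw [MeasureTheory.ae_eq_set]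
    constructor
    · have hdd : Set.Ioo 0 t \ V = Set.Ioo 0 t \ U := by
        ext y
        simp only [hV, Set.mem_diff, Set.mem_inter_iff]
        tauto
      rw [hdd]; exact hUfull
    · rw [Set.diff_eq_empty.2 hVsub]; simp
  have h2 : (∫ v in Set.Ioo 0 t, φ v) = ∫ v in V, φ v := setIntegral_congr_set haeeq
  set K : ℕ → Set ℝ := fun n => Set.Icc 0 t ∩ {x | 1 / ((n : ℝ) + 1) ≤ Metric.infDist x Vᶜ}
    with hK
  have hKcomp : ∀ n, IsCompact (K n) := fun n =>
    isCompact_Icc.inter_right (isClosed_le continuous_const (Metric.continuous_infDist_pt _))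
  have hKV : ∀ n, K n ⊆ V := by
    intro n y hy
    by_contra hyV
    have h0 : Metric.infDist y Vᶜ = 0 := Metric.infDist_zero_of_mem hyV
    have h1' : 1 / ((n : ℝ) + 1) ≤ Metric.infDist y Vᶜ := hy.2
    have hpos : 0 < 1 / ((n : ℝ) + 1) := by positivity
    rw [h0] at h1'
    linarith
  have hKmono : Monotone K := by
    intro m n hmn y hy
    refine ⟨hy.1, ?_⟩
    have h1' : 1 / ((m : ℝ) + 1) ≤ Metric.infDist y Vᶜ := hy.2
    have : 1 / ((n : ℝ) + 1) ≤ 1 / ((m : ℝ) + 1) := by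
      gcongr

    exact this.trans h1'
  have hKunion : (⋃ n, K n) = V := by
    apply Set.Subset.antisymm (Set.iUnion_subset hKV)
    intro y hy
    have hyIcc : y ∈ Set.Icc 0 t := ⟨(hVsub hy).1.le, (hVsub hy).2.le⟩
    have hVc : IsClosed (Vᶜ) := hVopen.isClosed_compl
    have hVcne : (Vᶜ).Nonempty := ⟨t + 1, fun h => absurd (hVsub h).2 (by linarith)⟩
    have hd : 0 < Metric.infDist y Vᶜ :=
      (IsClosed.notMem_iff_infDist_pos hVc hVcne).1 (fun h => h hy)
    obtain ⟨n, hn⟩ := exists_nat_gt (1 / Metric.infDist y Vᶜ)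
    have hn1 : 1 / Metric.infDist y Vᶜ < (n : ℝ) + 1 := hn.trans (lt_add_one _)
    have : 1 / ((n : ℝ) + 1) ≤ Metric.infDist y Vᶜ := by
      rw [div_lt_iff₀ hd] at hn1
      rw [div_le_iff₀ (by positivity)]
      nlinarith
    exact Set.mem_iUnion.2 ⟨n, hyIcc, this⟩
  have hVint : IntegrableOn φ V := hφint.mono_set
    (fun y hy => ⟨(hVsub hy).1.le, (hVsub hy).2.le⟩)
  have htend := tendsto_setIntegral_of_monotone (μ := volume) (f := φ)
      (fun n => (hKcomp n).measurableSet) hKmono (hKunion ▸ hVint)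
  rw [hKunion] at htend
  rw [h1, h2]
  refine le_of_tendsto htend (Filter.Eventually.of_forall fun n => ?_)
  exact compact_bound X hXm t ht φ hφ0 hφint U hinc hVopen hVsub hVU (hKcomp n) (hKV n)
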